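/- The unique Nash equilibrium y* is a locally exponentially stable equilibrium of the opinion system: there exist constants r > 0, C ≥ 1 and λ > 0 such that every solution y : [0,∞) → ℝᴺ of ẏ_i = Σ_{k=1}^N m_k (y_k − y_i) + σ (θ_i − y_i^p) y_i with ‖y(0) − y*‖ ≤ r satisfies ‖y(t) − y*‖ ≤ C e^(−λ t) ‖y(0) − y*‖ for all t ≥ 0. -/

import Mathlib

open Filter Topology Finset Real

/-- Coordinate bound for the Euclidean norm. -/
lemma aux_coord_le_norm {N : ℕ} (v : EuclideanSpace ℝ (Fin N)) (i : Fin N) : |v i| ≤ ‖v‖ := by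
  rw [EuclideanSpace.norm_eq]
  have h1 : |v i| = Real.sqrt (|v i| ^ 2) := by
    rw [Real.sqrt_sq (abs_nonneg _)]
  rw [h1]
  apply Real.sqrt_le_sqrt
  have := Finset.single_le_sum (f := fun k => ‖v k‖ ^ 2) (fun k _ => by positivity)
    (Finset.mem_univ i)
  simpa [Real.norm_eq_abs] using this

/-- Euclidean norm bounded via a uniform coordinate bound. -/
lemma aux_norm_le_sqrt {N : ℕ} [Nonempty (Fin N)] (v : EuclideanSpace ℝ (Fin N)) {B : ℝ}
    (hB : ∀ i, |v i| ≤ B) : ‖v‖ ≤ Real.sqrt N * B := by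
  have hB0 : 0 ≤ B := le_trans (abs_nonneg _) (hB (Classical.arbitrary _))
  rw [EuclideanSpace.norm_eq]
  have h : ∑ i, ‖v i‖ ^ 2 ≤ (N : ℝ) * B ^ 2 := by
    calc ∑ i, ‖v i‖ ^ 2 ≤ ∑ _i : Fin N, B ^ 2 := by
          apply Finset.sum_le_sum
          intro i _
          have := hB i
          rw [Real.norm_eq_abs]
          nlinarith [abs_nonneg (v i)]
      _ = (N : ℝ) * B ^ 2 := by simp [mul_comm]
  calc Real.sqrt (∑ i, ‖v i‖ ^ 2) ≤ Real.sqrt ((N : ℝ) * B ^ 2) := Real.sqrt_le_sqrt h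
    _ = Real.sqrt N * B := by
        rw [Real.sqrt_mul (by positivity), Real.sqrt_sq hB0]

/-- Mean value theorem for the nonlinearity `u ↦ σ (θ - u^p) u` on positive reals. -/
lemma aux_mvt (σ θv p : ℝ) (hp : 0 < p) {a u : ℝ} (ha : 0 < a) (hu : 0 < u) :
    ∃ ξ, min u a ≤ ξ ∧ ξ ≤ max u a ∧
      σ * (θv - u ^ p) * u - σ * (θv - a ^ p) * a = σ * (θv - (p + 1) * ξ ^ p) * (u - a) := by
  have hder : ∀ v : ℝ, 0 < v →
      HasDerivAt (fun v : ℝ => σ * (θv * v - v ^ (p + 1))) (σ * (θv - (p + 1) * v ^ p)) v := by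
    intro v hv
    have h1 : HasDerivAt (fun v : ℝ => v ^ (p + 1)) ((p + 1) * v ^ p) v := by
      have := Real.hasDerivAt_rpow_const (x := v) (p := p + 1) (Or.inl hv.ne')
      simpa using this
    have h2 := (((hasDerivAt_id v).const_mul θv).sub h1).const_mul σ
    simpa [mul_one] using h2
  have hval : ∀ v : ℝ, 0 < v → σ * (θv - v ^ p) * v = σ * (θv * v - v ^ (p + 1)) := by
    intro v hv
    rw [Real.rpow_add_one hv.ne']
    ring
  rcases eq_or_ne u a with h | h
  · exact ⟨a, by simp [h], by simp [h], by simp [h]⟩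
  · have key : ∀ {x y : ℝ}, 0 < x → x < y →
        ∃ ξ, x ≤ ξ ∧ ξ ≤ y ∧
          σ * (θv - (p + 1) * ξ ^ p) = (σ * (θv - y ^ p) * y - σ * (θv - x ^ p) * x) / (y - x) := by
      intro x y hx hxy
      have hcont : ContinuousOn (fun v : ℝ => σ * (θv * v - v ^ (p + 1))) (Set.Icc x y) := by
        intro v hv
        exact ((hder v (lt_of_lt_of_le hx hv.1)).continuousAt).continuousWithinAt
      obtain ⟨c, hc, hceq⟩ := exists_hasDerivAt_eq_slope
        (fun v : ℝ => σ * (θv * v - v ^ (p + 1))) (fun v => σ * (θv - (p + 1) * v ^ p)) hxy hcont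
        (fun v hv => hder v (lt_of_lt_of_le hx hv.1.le))
      refine ⟨c, hc.1.le, hc.2.le, ?_⟩
      rw [hceq, hval x hx, hval y (lt_trans hx hxy)]
    rcases lt_or_gt_of_ne h with hlt | hgt
    · obtain ⟨ξ, h1, h2, h3⟩ := key hu hlt
      refine ⟨ξ, by rw [min_eq_left hlt.le]; exact h1, by rw [max_eq_right hlt.le]; exact h2, ?_⟩
      have hne : a - u ≠ 0 := by linarith
      field_simp at h3
      nlinarith [h3]
    · obtain ⟨ξ, h1, h2, h3⟩ := key ha hgt
      refine ⟨ξ, by rw [min_eq_right hgt.le]; exact h1, by rw [max_eq_left hgt.le]; exact h2, ?_⟩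
      have hne : u - a ≠ 0 := by linarith
      field_simp at h3
      nlinarith [h3]

/-- From a derivative bound, a one-sided slope bound eventually holds. -/
lemma aux_slope_eventually {g : ℝ → ℝ} {d x r : ℝ} (hg : HasDerivAt g d x) (hdr : d < r) :
    ∀ᶠ z in 𝓝[>] x, (z - x)⁻¹ * (g z - g x) < r := by
  have h := hasDerivAt_iff_tendsto_slope.1 hg
  have h2 : Tendsto (slope g x) (𝓝[>] x) (𝓝 d) :=
    h.mono_left (nhdsWithin_mono x fun z hz => ne_of_gt hz)
  have := h2.eventually_lt_const hdr
  filter_upwards [this] with z hz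
  simpa [slope_def_field, div_eq_inv_mul] using hz

set_option maxHeartbeats 1000000 in
theorem nash_equilibrium_locally_exponentially_stable
    {N : ℕ} (hN : 0 < N)
    (m θ : Fin N → ℝ) (hm : ∀ i, 0 < m i) (hθ : ∀ i, 0 < θ i)
    {σ p : ℝ} (hσ : 0 < σ) (hp : 0 < p)
    (ystar : EuclideanSpace ℝ (Fin N)) (hpos : ∀ i, 0 < ystar i)
    (heq : ∀ i, ∑ k, m k * (ystar k - ystar i) + σ * (θ i - ystar i ^ p) * ystar i = 0) :
    ∃ r C lam : ℝ, 0 < r ∧ 1 ≤ C ∧ 0 < lam ∧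
      ∀ y : ℝ → EuclideanSpace ℝ (Fin N),
        (∀ i, ∀ t, 0 ≤ t → HasDerivAt (fun s => y s i)
          (∑ k, m k * (y t k - y t i) + σ * (θ i - y t i ^ p) * y t i) t) →
        ‖y 0 - ystar‖ ≤ r →
        ∀ t, 0 ≤ t → ‖y t - ystar‖ ≤ C * Real.exp (-lam * t) * ‖y 0 - ystar‖ := by
  classical
  haveI : Nonempty (Fin N) := Fin.pos_iff_nonempty.1 hN
  have hne : (Finset.univ : Finset (Fin N)).Nonempty := univ_nonempty
  set w : Fin N → ℝ := fun i => ystar i with hw_def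
  have hw : ∀ i, 0 < w i := hpos
  -- equilibrium identity
  have hkey : ∀ i, ∑ k, m k * w k = (∑ k, m k) * w i - σ * (θ i - w i ^ p) * w i := by
    intro i
    have h := heq i
    have h2 : ∑ k, m k * (w k - w i) = ∑ k, m k * w k - (∑ k, m k) * w i := by
      rw [Finset.sum_mul]
      rw [← Finset.sum_sub_distrib]
      congr 1; ext k; ring
    rw [h2] at h
    linarith
  -- construction of η
  have hηex : ∀ i : Fin N, ∃ η : ℝ, 0 < η ∧ η ≤ w i / 2 ∧
      ∀ ξ : ℝ, |ξ - w i| ≤ η → (1 + p / 2) * w i ^ p ≤ (p + 1) * ξ ^ p := by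
    intro i
    have hc : ContinuousAt (fun ξ : ℝ => (p + 1) * ξ ^ p) (w i) :=
      (Real.continuousAt_rpow_const _ _ (Or.inl (hw i).ne')).const_mul _
    have hlt : (1 + p / 2) * w i ^ p < (p + 1) * w i ^ p := by
      have := Real.rpow_pos_of_pos (hw i) p
      nlinarith
    have hev : ∀ᶠ ξ in 𝓝 (w i), (1 + p / 2) * w i ^ p < (p + 1) * ξ ^ p :=
      hc.eventually_const_lt hlt
    rw [Metric.eventually_nhds_iff] at hev
    obtain ⟨ε, hε, hball⟩ := hev
    refine ⟨min (ε / 2) (w i / 2), lt_min (by linarith) (by linarith [hw i]), min_le_right _ _, ?_⟩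
    intro ξ hξ
    have : dist ξ (w i) < ε := by
      rw [Real.dist_eq]
      calc |ξ - w i| ≤ min (ε / 2) (w i / 2) := hξ
        _ ≤ ε / 2 := min_le_left _ _
        _ < ε := by linarith
    exact (hball this).le
  choose η hη1 hη2 hη3 using hηex
  -- constants
  set lam : ℝ := σ * p / 2 * (univ.inf' hne fun i => w i ^ p) with hlam_def
  have hinfw : 0 < univ.inf' hne fun i => w i ^ p :=
    (Finset.lt_inf'_iff hne).2 fun i _ => Real.rpow_pos_of_pos (hw i) p
  have hlam : 0 < lam := mul_pos (by positivity) hinfw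
  set wmin : ℝ := univ.inf' hne w with hwmin_def
  set wmax : ℝ := univ.sup' hne w with hwmax_def
  have hwmin : 0 < wmin := (Finset.lt_inf'_iff hne).2 fun i _ => hw i
  have hwmax : 0 < wmax := lt_of_lt_of_le hwmin (by
    obtain ⟨i⟩ := ‹Nonempty (Fin N)›
    exact le_trans (Finset.inf'_le w (mem_univ i)) (Finset.le_sup' w (mem_univ i)))
  set δ : ℝ := univ.inf' hne fun i => η i / w i with hδ_def
  have hδ : 0 < δ := (Finset.lt_inf'_iff hne).2 fun i _ => div_pos (hη1 i) (hw i)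
  set r : ℝ := δ * wmin / 2 with hr_def
  have hr : 0 < r := by positivity
  set C : ℝ := max 1 (Real.sqrt N * wmax / wmin) with hC_def
  refine ⟨r, C, lam, hr, le_max_left _ _, hlam, ?_⟩
  intro y hy hinit
  -- weighted sup norm
  set V : ℝ → ℝ := fun t => univ.sup' hne fun i => |y t i - w i| / w i with hV_def
  have hVnonneg : ∀ t, 0 ≤ V t := by
    intro t
    obtain ⟨i⟩ := ‹Nonempty (Fin N)›
    exact le_trans (div_nonneg (abs_nonneg _) (hw i).le) (Finset.le_sup' (fun i => |y t i - w i| / w i) (mem_univ i))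
  have hVcoord : ∀ t i, |y t i - w i| ≤ w i * V t := by
    intro t i
    have := Finset.le_sup' (fun i => |y t i - w i| / w i) (mem_univ i)
    rw [div_le_iff₀ (hw i)] at this
    calc |y t i - w i| ≤ V t * w i := this
      _ = w i * V t := mul_comm _ _
  have hsub : ∀ t i, (y t - ystar) i = y t i - w i := fun t i => rfl
  -- norm comparisons
  have hnorm_up : ∀ t, ‖y t - ystar‖ ≤ Real.sqrt N * (wmax * V t) := by
    intro t
    apply aux_norm_le_sqrt
    intro i
    rw [hsub]
    calc |y t i - w i| ≤ w i * V t := hVcoord t i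
      _ ≤ wmax * V t := by
          apply mul_le_mul_of_nonneg_right _ (hVnonneg t)
          exact Finset.le_sup' w (mem_univ i)
  have hnorm_dn : ∀ t, V t ≤ ‖y t - ystar‖ / wmin := by
    intro t
    apply Finset.sup'_le
    intro i _
    apply div_le_div₀ (norm_nonneg _) _ hwmin (Finset.inf'_le w (mem_univ i))
    rw [← hsub t i]
    exact aux_coord_le_norm _ i
  have hV0 : V 0 ≤ δ / 2 := by
    calc V 0 ≤ ‖y 0 - ystar‖ / wmin := hnorm_dn 0
      _ ≤ r / wmin := by gcongr
      _ = δ / 2 := by rw [hr_def]; field_simp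
  -- continuity of V
  have hVcont : ∀ t, 0 ≤ t → ContinuousAt V t := by
    intro t ht
    apply ContinuousAt.finset_sup'_apply hne
    intro i _
    exact (((hy i t ht).continuousAt.sub continuousAt_const).abs).div_const _
  -- the core row estimate
  have hcore : ∀ t, 0 ≤ t → V t ≤ δ → ∀ j, w j * V t = |y t j - w j| →
      ∀ s : ℝ, s = 1 ∨ s = -1 → s * (y t j - w j) = |y t j - w j| →
      s * ((∑ k, m k * (y t k - y t j) + σ * (θ j - y t j ^ p) * y t j) / w j)
        ≤ -lam * V t := by
    intro t ht hVδ j hj s hsor hse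
    have hVt := hVnonneg t
    have hδη : δ ≤ η j / w j := Finset.inf'_le _ (mem_univ j)
    have hclose : |y t j - w j| ≤ η j := by
      rw [← hj]
      calc w j * V t ≤ w j * δ := mul_le_mul_of_nonneg_left hVδ (hw j).le
        _ ≤ w j * (η j / w j) := mul_le_mul_of_nonneg_left hδη (hw j).le
        _ = η j := mul_div_cancel₀ _ (hw j).ne'
    have hub := abs_le.1 hclose
    have hu_pos : 0 < y t j := by have := hη2 j; have := hw j; linarith
    obtain ⟨ξ, hξ1, hξ2, hξeq⟩ := aux_mvt σ (θ j) p hp (hw j) hu_pos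
    have hξclose : |ξ - w j| ≤ η j := by
      have h1 : w j - η j ≤ min (y t j) (w j) := le_min (by linarith) (by linarith [hη1 j])
      have h2 : max (y t j) (w j) ≤ w j + η j := max_le (by linarith) (by linarith [hη1 j])
      rw [abs_le]
      constructor <;> linarith
    have hξp := hη3 j ξ hξclose
    have hsum1 : ∑ k, m k * (y t k - y t j) =
        (∑ k, m k * (y t k - w k)) + (∑ k, m k * w k) - (∑ k, m k) * y t j := by
      rw [Finset.sum_mul, ← Finset.sum_add_distrib, ← Finset.sum_sub_distrib]
      congr 1
      ext k
      ring
    have hF : (∑ k, m k * (y t k - y t j) + σ * (θ j - y t j ^ p) * y t j) =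
        (∑ k, m k * (y t k - w k)) +
          (σ * (θ j - (p + 1) * ξ ^ p) - ∑ k, m k) * (y t j - w j) := by
      rw [hsum1, hkey j]
      linear_combination hξeq
    have hS : s * (∑ k, m k * (y t k - w k)) ≤ (∑ k, m k * w k) * V t := by
      have h1 : s * (∑ k, m k * (y t k - w k)) ≤ |∑ k, m k * (y t k - w k)| := by
        rcases hsor with h | h <;> rw [h]
        · rw [one_mul]; exact le_abs_self _
        · rw [neg_one_mul]; exact neg_le_abs _
      calc s * (∑ k, m k * (y t k - w k)) ≤ |∑ k, m k * (y t k - w k)| := h1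
        _ ≤ ∑ k, |m k * (y t k - w k)| := Finset.abs_sum_le_sum_abs _ _
        _ ≤ ∑ k, m k * (w k * V t) := by
            apply Finset.sum_le_sum
            intro k _
            rw [abs_mul, abs_of_pos (hm k)]
            exact mul_le_mul_of_nonneg_left (hVcoord t k) (hm k).le
        _ = (∑ k, m k * w k) * V t := by
            rw [Finset.sum_mul]
            congr 1
            ext k
            ring
    have hgoal : s * (∑ k, m k * (y t k - y t j) + σ * (θ j - y t j ^ p) * y t j)
        ≤ (-lam * V t) * w j := by
      have hsF : s * (∑ k, m k * (y t k - y t j) + σ * (θ j - y t j ^ p) * y t j)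
          = s * (∑ k, m k * (y t k - w k)) +
            (σ * (θ j - (p + 1) * ξ ^ p) - ∑ k, m k) * (w j * V t) := by
        rw [hF]
        rw [mul_add]
        congr 1
        rw [hj, ← hse]
        ring
      rw [hsF]
      have hlamle : lam ≤ σ * p / 2 * w j ^ p := by
        rw [hlam_def]
        exact mul_le_mul_of_nonneg_left
          (Finset.inf'_le (fun i => w i ^ p) (mem_univ j)) (by positivity)
      have hwp : 0 < w j ^ p := Real.rpow_pos_of_pos (hw j) p
      have hkeyj := hkey j
      have hmult1 : (1 + p / 2) * w j ^ p * (σ * (w j * V t))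
          ≤ (p + 1) * ξ ^ p * (σ * (w j * V t)) := by
        apply mul_le_mul_of_nonneg_right hξp
        have := (hw j).le
        positivity
      have hmult2 : lam * (V t * w j) ≤ σ * p / 2 * w j ^ p * (V t * w j) := by
        apply mul_le_mul_of_nonneg_right hlamle
        have := (hw j).le
        positivity
      rw [hkeyj] at hS
      linarith [hS, hmult1, hmult2]
    calc s * ((∑ k, m k * (y t k - y t j) + σ * (θ j - y t j ^ p) * y t j) / w j)
        = (s * (∑ k, m k * (y t k - y t j) + σ * (θ j - y t j ^ p) * y t j)) / w j := by
          ring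
      _ ≤ ((-lam * V t) * w j) / w j := by
          gcongr
          exact (hw j).le
      _ = -lam * V t := mul_div_cancel_right₀ _ (hw j).ne'
  -- slope estimate for V
  have hslope : ∀ x : ℝ, 0 ≤ x → V x ≤ δ → ∀ r', -lam * V x < r' →
      ∀ᶠ ζ in 𝓝[>] x, (ζ - x)⁻¹ * (V ζ - V x) < r' := by
    intro x hx hVδ r' hr'
    have hco : ∀ j : Fin N, ∀ᶠ ζ in 𝓝[>] x, |y ζ j - w j| / w j < V x + r' * (ζ - x) := by
      intro j
      have hle : |y x j - w j| / w j ≤ V x :=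
        Finset.le_sup' (fun i => |y x i - w i| / w i) (mem_univ j)
      rcases lt_or_eq_of_le hle with hlt | heqj
      · -- strictly below the max: continuity suffices
        have hcj : ContinuousAt (fun ζ => |y ζ j - w j| / w j) x :=
          (((hy j x hx).continuousAt.sub continuousAt_const).abs).div_const _
        have h1 : Tendsto (fun ζ => |y ζ j - w j| / w j) (𝓝[>] x)
            (𝓝 (|y x j - w j| / w j)) := (hcj.continuousWithinAt)
        have h2 : Tendsto (fun ζ : ℝ => V x + r' * (ζ - x)) (𝓝[>] x) (𝓝 (V x)) := by
          have h3 : Tendsto (fun ζ : ℝ => V x + r' * (ζ - x)) (𝓝 x)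
              (𝓝 (V x + r' * (x - x))) :=
            tendsto_const_nhds.add
              (tendsto_const_nhds.mul ((continuous_id.sub continuous_const).tendsto x))
          simpa using h3.mono_left nhdsWithin_le_nhds
        exact h1.eventually_lt h2 hlt
      · -- this coordinate achieves the max
        by_cases hVx0 : V x = 0
        · -- at the equilibrium itself
          have hall : ∀ k, y x k = w k := by
            intro k
            have h0 := hVcoord x k
            rw [hVx0, mul_zero] at h0
            have := abs_nonneg (y x k - w k)
            have h1 : |y x k - w k| = 0 := le_antisymm h0 this
            have := abs_eq_zero.1 h1
            linarith
          have hr'0 : 0 < r' := by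
            rw [hVx0, mul_zero] at hr'
            exact hr'
          have hF0 : (∑ k, m k * (y x k - y x j) + σ * (θ j - y x j ^ p) * y x j) = 0 := by
            calc (∑ k, m k * (y x k - y x j) + σ * (θ j - y x j ^ p) * y x j)
                = ∑ k, m k * (w k - w j) + σ * (θ j - w j ^ p) * w j := by
                  congr 1
                  · exact Finset.sum_congr rfl fun k _ => by rw [hall k, hall j]
                  · rw [hall j]
              _ = 0 := heq j
          have hd : HasDerivAt (fun ζ => y ζ j - w j) 0 x := by
            have := (hy j x hx).sub_const (w j)
            rwa [hF0] at this
          have hsl : Tendsto (fun ζ => |slope (fun ζ => y ζ j - w j) x ζ|) (𝓝[>] x) (𝓝 0) := by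
            have h := hasDerivAt_iff_tendsto_slope.1 hd
            have h2 : Tendsto (slope (fun ζ => y ζ j - w j) x) (𝓝[>] x) (𝓝 0) :=
              h.mono_left (nhdsWithin_mono x fun z hz => ne_of_gt hz)
            simpa using h2.abs
          have hrw : 0 < r' * w j := mul_pos hr'0 (hw j)
          have hev := hsl.eventually_lt_const hrw
          filter_upwards [hev, self_mem_nhdsWithin] with ζ h1 h2
          have hζx : 0 < ζ - x := sub_pos.2 h2
          rw [slope_def_field] at h1
          rw [hall j, sub_self, sub_zero, abs_div, abs_of_pos hζx, div_lt_iff₀ hζx] at h1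
          rw [hVx0, zero_add, div_lt_iff₀ (hw j)]
          nlinarith [h1]
        · -- the max is positive
          have hVpos : 0 < V x := lt_of_le_of_ne (hVnonneg x) (Ne.symm hVx0)
          have hyne : y x j ≠ w j := by
            intro hcontra
            rw [hcontra, sub_self, abs_zero, zero_div] at heqj
            exact hVx0 heqj.symm
          set s : ℝ := if w j < y x j then 1 else -1 with hs_def
          have hsor : s = 1 ∨ s = -1 := by
            by_cases h : w j < y x j <;> simp [hs_def, h]
          have hse : s * (y x j - w j) = |y x j - w j| := by
            by_cases h : w j < y x j
            · rw [hs_def, if_pos h, one_mul, abs_of_pos (sub_pos.2 h)]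
            · have hlt2 : y x j < w j := lt_of_le_of_ne (not_lt.1 h) hyne
              rw [hs_def, if_neg h, abs_of_neg (sub_neg.2 hlt2)]
              ring
          have hd : HasDerivAt (fun ζ => s * ((y ζ j - w j) / w j))
              (s * ((∑ k, m k * (y x k - y x j) + σ * (θ j - y x j ^ p) * y x j) / w j)) x :=
            (((hy j x hx).sub_const (w j)).div_const (w j)).const_mul s
          have hev_eq : (fun ζ => |y ζ j - w j| / w j)
              =ᶠ[𝓝 x] fun ζ => s * ((y ζ j - w j) / w j) := by
            have hcont : ContinuousAt (fun ζ => y ζ j - w j) x :=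
              (hy j x hx).continuousAt.sub continuousAt_const
            by_cases h : w j < y x j
            · have hpos2 : (0:ℝ) < y x j - w j := sub_pos.2 h
              filter_upwards [hcont.eventually_const_lt hpos2] with ζ hζ
              rw [hs_def, if_pos h, one_mul, abs_of_pos hζ]
            · have hlt2 : y x j - w j < 0 :=
                sub_neg.2 (lt_of_le_of_ne (not_lt.1 h) hyne)
              filter_upwards [hcont.eventually_lt_const hlt2] with ζ hζ
              rw [hs_def, if_neg h, abs_of_neg hζ]
              ring
          have hd2 : HasDerivAt (fun ζ => |y ζ j - w j| / w j)
              (s * ((∑ k, m k * (y x k - y x j) + σ * (θ j - y x j ^ p) * y x j) / w j)) x :=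
            hd.congr_of_eventuallyEq hev_eq
          have hj : w j * V x = |y x j - w j| := by
            rw [← heqj, mul_div_cancel₀ _ (hw j).ne']
          have hder_lt : s * ((∑ k, m k * (y x k - y x j)
              + σ * (θ j - y x j ^ p) * y x j) / w j) < r' :=
            lt_of_le_of_lt (hcore x hx hVδ j hj s hsor hse) hr'
          have hev2 := aux_slope_eventually hd2 hder_lt
          filter_upwards [hev2, self_mem_nhdsWithin] with ζ h1 h2
          have hζx : 0 < ζ - x := sub_pos.2 h2
          rw [heqj] at h1
          rw [inv_mul_lt_iff₀ hζx] at h1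
          linarith
    have hallj := eventually_all.2 hco
    filter_upwards [hallj, self_mem_nhdsWithin] with ζ h1 h2
    have hζx : 0 < ζ - x := sub_pos.2 h2
    have hVζ : V ζ < V x + r' * (ζ - x) := (Finset.sup'_lt_iff hne).2 fun i _ => h1 i
    rw [inv_mul_lt_iff₀ hζx]
    linarith
  -- Gronwall with bootstrap
  have hGron : ∀ T, 0 ≤ T → V T ≤ V 0 * Real.exp (-lam * T) := by
    intro T hT
    set A : Set ℝ := {t | t ∈ Set.Icc 0 T ∧ ∀ s ∈ Set.Icc 0 t, V s ≤ δ} with hA_def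
    have h0A : (0:ℝ) ∈ A := by
      refine ⟨⟨le_refl 0, hT⟩, ?_⟩
      intro s hs
      have hs0 : s = 0 := le_antisymm hs.2 hs.1
      rw [hs0]
      linarith
    have hAne : A.Nonempty := ⟨0, h0A⟩
    have hAbdd : BddAbove A := ⟨T, fun a ha => ha.1.2⟩
    set b := sSup A with hb_def
    have hb0 : 0 ≤ b := le_csSup hAbdd h0A
    have hbT : b ≤ T := csSup_le hAne fun a ha => ha.1.2
    have hlt_mem : ∀ u, 0 ≤ u → u < b → V u ≤ δ := by
      intro u hu0 hub
      obtain ⟨a, haA, hua⟩ := exists_lt_of_lt_csSup hAne hub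
      exact haA.2 u ⟨hu0, hua.le⟩
    have hregion : ∀ s ∈ Set.Icc (0:ℝ) b, V s ≤ δ := by
      intro s hs
      rcases lt_or_eq_of_le hs.2 with hlt | heqb
      · exact hlt_mem s hs.1 hlt
      · rcases eq_or_lt_of_le hb0 with hb0' | hb0'
        · -- b = 0, so s = 0
          have : s = 0 := by rw [heqb, ← hb0']
          rw [this]
          linarith
        · -- 0 < b : limit from the left
          have hcont : Tendsto V (𝓝[<] b) (𝓝 (V b)) :=
            (hVcont b hb0).continuousWithinAt
          have hev : ∀ᶠ u in 𝓝[<] b, V u ≤ δ := by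
            have hmem : Set.Ioo (0:ℝ) b ∈ 𝓝[<] b :=
              Ioo_mem_nhdsLT_of_mem ⟨hb0', le_refl b⟩
            filter_upwards [hmem] with u hu
            exact hlt_mem u hu.1.le hu.2
          have : V b ≤ δ := le_of_tendsto hcont hev
          rw [heqb]
          exact this
    have hgb : ∀ t ∈ Set.Icc (0:ℝ) b, V t ≤ gronwallBound (V 0) (-lam) 0 (t - 0) := by
      apply le_gronwallBound_of_liminf_deriv_right_le (f' := fun x => -lam * V x)
      · intro t ht
        exact (hVcont t ht.1).continuousWithinAt
      · intro x hx' r' hr'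
        exact (hslope x hx'.1 (hregion x ⟨hx'.1, hx'.2.le⟩) r' hr').frequently
      · exact le_refl _
      · intro x _
        simp
    have hVb : ∀ t ∈ Set.Icc (0:ℝ) b, V t ≤ V 0 * Real.exp (-lam * t) := by
      intro t ht
      have h := hgb t ht
      rwa [sub_zero, gronwallBound_ε0] at h
    rcases eq_or_lt_of_le hbT with hbeq | hblt
    · rw [← hbeq]
      exact hVb b ⟨hb0, le_refl b⟩
    · exfalso
      have hVbδ : V b < δ := by
        have h1 := hVb b ⟨hb0, le_refl b⟩
        have h2 : Real.exp (-lam * b) ≤ 1 :=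
          Real.exp_le_one_iff.2 (by nlinarith)
        have h3 : V b ≤ V 0 :=
          le_trans h1 (mul_le_of_le_one_right (hVnonneg 0) h2)
        linarith [hV0, hδ]
      have hevb : ∀ᶠ u in 𝓝 b, V u < δ :=
        Tendsto.eventually_lt_const hVbδ (hVcont b hb0)
      rw [Metric.eventually_nhds_iff] at hevb
      obtain ⟨ε, hε, hball⟩ := hevb
      set b' := min T (b + ε / 2) with hb'_def
      have hb'A : b' ∈ A := by
        refine ⟨⟨le_trans hb0 (le_min hbT (by linarith)), min_le_left _ _⟩, ?_⟩
        intro s hs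
        rcases le_or_gt s b with h | h
        · exact hregion s ⟨hs.1, h⟩
        · apply le_of_lt
          apply hball
          have hsb : s ≤ b + ε / 2 := le_trans hs.2 (min_le_right _ _)
          rw [Real.dist_eq, abs_of_pos (sub_pos.2 h)]
          linarith
      have hb'le : b' ≤ b := le_csSup hAbdd hb'A
      have hbb' : b < b' := lt_min hblt (by linarith)
      linarith
  -- conclusion
  intro t ht
  have hVt := hGron t ht
  have h1 : ‖y t - ystar‖ ≤ Real.sqrt N * (wmax * (V 0 * Real.exp (-lam * t))) := by
    refine le_trans (hnorm_up t) ?_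
    have : wmax * V t ≤ wmax * (V 0 * Real.exp (-lam * t)) :=
      mul_le_mul_of_nonneg_left hVt hwmax.le
    exact mul_le_mul_of_nonneg_left this (Real.sqrt_nonneg _)
  have h2 : V 0 ≤ ‖y 0 - ystar‖ / wmin := hnorm_dn 0
  have hCge : Real.sqrt N * wmax / wmin ≤ C := le_max_right _ _
  have hexp : 0 < Real.exp (-lam * t) := Real.exp_pos _
  have hsN : 0 < Real.sqrt N := Real.sqrt_pos.2 (by exact_mod_cast hN)
  calc ‖y t - ystar‖ ≤ Real.sqrt N * (wmax * (V 0 * Real.exp (-lam * t))) := h1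
    _ ≤ Real.sqrt N * (wmax * ((‖y 0 - ystar‖ / wmin) * Real.exp (-lam * t))) := by
        apply mul_le_mul_of_nonneg_left _ (Real.sqrt_nonneg _)
        apply mul_le_mul_of_nonneg_left _ hwmax.le
        exact mul_le_mul_of_nonneg_right h2 hexp.le
    _ = (Real.sqrt N * wmax / wmin) * Real.exp (-lam * t) * ‖y 0 - ystar‖ := by
        field_simp
    _ ≤ C * Real.exp (-lam * t) * ‖y 0 - ystar‖ := by
        apply mul_le_mul_of_nonneg_right _ (norm_nonneg _)
        exact mul_le_mul_of_nonneg_right hCge hexp.le
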